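/- Polynomial chaos coefficients of the uncertain shock: let a, b, ξ_s ∈ ℝ and let u : ℝ → ℝ be defined by u(ξ) = a + b·ξ for ξ > ξ_s and u(ξ) = −a + b·ξ for ξ ≤ ξ_s. Then for every integer i ≥ 1, the i-th polynomial chaos coefficient of u satisfies ∫_{ℝ} u(ξ)·φ_i(ξ)·ω(ξ) dξ = b·δ_{i,1} + a·(√2/√(π·i))·φ_{i−1}(ξ_s)·exp(−ξ_s²/2), where δ_{i,1} is the Kronecker delta. -/

import Mathlib

open Polynomial Real MeasureTheory Filter Set Topology

noncomputable def Hp17 (n : ℕ) : Polynomial ℝ := (hermite n).map (Int.castRingHom ℝ)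

lemma Hp17_zero : Hp17 0 = 1 := by simp [Hp17, hermite_zero]

lemma Hp17_succ (n : ℕ) : Hp17 (n+1) = X * Hp17 n - derivative (Hp17 n) := by
  simp [Hp17, hermite_succ, Polynomial.map_sub, Polynomial.map_mul, derivative_map]

lemma dHermite17 : ∀ n : ℕ, derivative (hermite (n+1)) = C ((n : ℤ)+1) * hermite n := by
  intro n
  induction n with
  | zero => simp [hermite_one, hermite_zero]
  | succ n ih =>
    rw [hermite_succ (n+1), derivative_sub, derivative_mul, derivative_X, one_mul, ih,
      derivative_mul, derivative_C, zero_mul, zero_add, hermite_succ n]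
    have hC : (C (((n:ℤ)+1)+1) : Polynomial ℤ) = C ((n:ℤ)+1) + 1 := by
      simp [C_add]
    push_cast
    rw [hC]
    ring

lemma Hp17_deriv (n : ℕ) : derivative (Hp17 (n+1)) = C ((n:ℝ)+1) * Hp17 n := by
  rw [Hp17, derivative_map, dHermite17, Polynomial.map_mul, map_C]
  norm_num [Hp17]

lemma Hp17_rec (n : ℕ) : Hp17 (n+2) = X * Hp17 (n+1) - C ((n:ℝ)+1) * Hp17 n := by
  rw [Hp17_succ (n+1), Hp17_deriv]

-- integrability of polynomial × Gaussian
lemma PInt17 (p : Polynomial ℝ) : Integrable fun x : ℝ => p.eval x * rexp (-x^2/2) := by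
  induction p using Polynomial.induction_on' with
  | add p q hp hq => simp only [eval_add, add_mul]; exact hp.add hq
  | monomial n c =>
    have h : Integrable fun x : ℝ => x ^ (n:ℝ) * rexp (-(1/2) * x^2) :=
      integrable_rpow_mul_exp_neg_mul_sq (b := 1/2) (s := (n:ℝ)) (by norm_num)
        (lt_of_lt_of_le (by norm_num) (Nat.cast_nonneg n))
    have h' : Integrable fun x : ℝ => |x ^ n * rexp (-x^2/2)| := by
      refine h.abs.congr (ae_of_all _ fun x => ?_)
      simp only []
      rw [Real.rpow_natCast]
      congr 2
      ring
    refine (h'.const_mul |c|).mono' ?_ ?_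
    · apply Continuous.aestronglyMeasurable
      continuity
    · filter_upwards with x
      simp [eval_monomial, Real.norm_eq_abs, abs_mul, mul_assoc]

-- decay of polynomial × Gaussian at ±∞
lemma Ptend17 (p : Polynomial ℝ) :
    Tendsto (fun x : ℝ => p.eval x * rexp (-x^2/2)) atTop (𝓝 0) := by
  have h1 := p.tendsto_div_exp_atTop
  have h2 : Tendsto (fun x : ℝ => rexp (x - x^2/2)) atTop (𝓝 0) := by
    apply Real.tendsto_exp_atBot.comp
    have hev : (fun x : ℝ => x - x^2/2) ≤ᶠ[atTop] fun x : ℝ => -x := by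
      filter_upwards [eventually_ge_atTop (4:ℝ)] with x hx
      nlinarith
    exact tendsto_atBot_mono' atTop hev tendsto_neg_atTop_atBot
  have h := h1.mul h2
  rw [zero_mul] at h
  refine h.congr fun x => ?_
  rw [Real.exp_sub]
  have : -x^2/2 = -(x^2/2) := by ring
  rw [this, Real.exp_neg]
  field_simp

lemma PtendBot17 (p : Polynomial ℝ) :
    Tendsto (fun x : ℝ => p.eval x * rexp (-x^2/2)) atBot (𝓝 0) := by
  have h := (Ptend17 (p.comp (-X))).comp tendsto_neg_atBot_atTop
  refine h.congr fun x => ?_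
  simp [Function.comp, Polynomial.eval_comp]

noncomputable def G17 (n : ℕ) (x : ℝ) : ℝ := (Hp17 n).eval x * rexp (-x^2/2)

lemma G17_int (n : ℕ) : Integrable (G17 n) := PInt17 (Hp17 n)

lemma G17_xmul (n : ℕ) : Integrable (fun x => x * G17 n x) := by
  have := PInt17 (X * Hp17 n)
  refine this.congr (ae_of_all _ fun x => ?_)
  simp [G17, mul_assoc]

lemma G17_tendsto_top (n : ℕ) : Tendsto (G17 n) atTop (𝓝 0) := Ptend17 (Hp17 n)
lemma G17_tendsto_bot (n : ℕ) : Tendsto (G17 n) atBot (𝓝 0) := PtendBot17 (Hp17 n)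

lemma hasDerivAt_G17 (n : ℕ) (x : ℝ) : HasDerivAt (G17 n) (-(G17 (n+1) x)) x := by
  have h1 : HasDerivAt (fun y : ℝ => (Hp17 n).eval y) ((derivative (Hp17 n)).eval x) x :=
    (Hp17 n).hasDerivAt x
  have hx : HasDerivAt (fun y : ℝ => -y^2/2) (-x) x := by
    have := ((hasDerivAt_pow 2 x).neg).div_const 2
    refine this.congr_deriv ?_
    push_cast
    ring
  have h2 : HasDerivAt (fun y : ℝ => rexp (-y^2/2)) (rexp (-x^2/2) * (-x)) x := hx.exp
  have h := h1.mul h2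
  refine h.congr_deriv ?_
  simp only [G17, Hp17_succ, eval_sub, eval_mul, eval_X]
  ring

lemma G17_Ioi (n : ℕ) (s : ℝ) : ∫ x in Ioi s, G17 (n+1) x = G17 n s := by
  have h := integral_Ioi_of_hasDerivAt_of_tendsto' (a := s)
    (f := fun x => -(G17 n x)) (f' := G17 (n+1))
    (fun x _ => by have := (hasDerivAt_G17 n x).neg; simp only [neg_neg] at this; exact this)
    (G17_int (n+1)).integrableOn
    (by simpa using (G17_tendsto_top n).neg)
  simpa using h

lemma G17_Iic (n : ℕ) (s : ℝ) : ∫ x in Iic s, G17 (n+1) x = -(G17 n s) := by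
  have h := integral_Iic_of_hasDerivAt_of_tendsto' (a := s)
    (f := fun x => -(G17 n x)) (f' := G17 (n+1))
    (fun x _ => by have := (hasDerivAt_G17 n x).neg; simp only [neg_neg] at this; exact this)
    (G17_int (n+1)).integrableOn
    (by simpa using (G17_tendsto_bot n).neg)
  simpa using h

lemma G17_zero_total : ∫ x, G17 0 x = Real.sqrt (2 * Real.pi) := by
  have h := integral_gaussian (1/2)
  have : (∫ x : ℝ, G17 0 x) = ∫ x : ℝ, rexp (-(1/2) * x^2) := by
    congr 1
    funext x
    simp [G17, Hp17_zero]
    congr 1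
    ring
  rw [this, h]
  rw [show Real.pi / (1/2) = 2 * Real.pi by ring]

lemma G17_total (n : ℕ) : ∫ x, G17 n x = if n = 0 then Real.sqrt (2 * Real.pi) else 0 := by
  cases n with
  | zero => simpa using G17_zero_total
  | succ n =>
    rw [← intervalIntegral.integral_Iic_add_Ioi (b := (0:ℝ)) (G17_int (n+1)).integrableOn (G17_int (n+1)).integrableOn,
      G17_Iic, G17_Ioi]
    simp

lemma combo17 {μ : Measure ℝ} (c d e : ℝ) {f g h : ℝ → ℝ}
    (hf : Integrable f μ) (hg : Integrable g μ) (hh : Integrable h μ) :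
    ∫ x, (c * f x + d * (g x + e * h x)) ∂μ
      = c * (∫ x, f x ∂μ) + d * ((∫ x, g x ∂μ) + e * ∫ x, h x ∂μ) := by
  have h1 : Integrable (fun x => c * f x) μ := hf.const_mul c
  have h2 : Integrable (fun x => e * h x) μ := hh.const_mul e
  have h3 : Integrable (fun x => g x + e * h x) μ := hg.add h2
  rw [integral_add h1 (h3.const_mul d), integral_const_mul, integral_const_mul,
    integral_add hg h2, integral_const_mul]


open MeasureTheory in
/-- Polynomial chaos coefficients of the uncertain shock: for `i ≥ 1`,
`∫_ℝ u(ξ) φ_i(ξ) ω(ξ) dξ = b δ_{i,1} + a (√2/√(πi)) φ_{i-1}(ξ_s) exp(-ξ_s²/2)`. -/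
theorem stmt_17 (He : ℕ → ℝ → ℝ)
    (hHe0 : ∀ ξ, He 0 ξ = 1)
    (hHe1 : ∀ ξ, He 1 ξ = ξ)
    (hHerec : ∀ n ξ, He (n+2) ξ = ξ * He (n+1) ξ - (n+1) * He n ξ)
    (φ : ℕ → ℝ → ℝ)
    (hφ : ∀ i ξ, φ i ξ = He i ξ / Real.sqrt (Nat.factorial i))
    (ω : ℝ → ℝ)
    (hω : ∀ ξ, ω ξ = Real.exp (-ξ^2 / 2) / Real.sqrt (2 * Real.pi))
    (a b ξs : ℝ) (u : ℝ → ℝ)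
    (hu : ∀ ξ, u ξ = if ξs < ξ then a + b * ξ else -a + b * ξ)
    (i : ℕ) (hi : 1 ≤ i) :
    ∫ ξ, u ξ * φ i ξ * ω ξ
      = b * (if i = 1 then 1 else 0)
        + a * (Real.sqrt 2 / Real.sqrt (Real.pi * i)) * φ (i-1) ξs
          * Real.exp (-ξs^2 / 2) := by
  obtain ⟨n, rfl⟩ : ∃ n, i = n + 1 := ⟨i - 1, (Nat.succ_pred_eq_of_pos hi).symm⟩
  -- bridge He to Hp17
  have Hebr : ∀ k ξ, He k ξ = (Hp17 k).eval ξ := by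
    have key : ∀ k, (∀ ξ, He k ξ = (Hp17 k).eval ξ)
        ∧ (∀ ξ, He (k+1) ξ = (Hp17 (k+1)).eval ξ) := by
      intro k
      induction k with
      | zero =>
        refine ⟨fun ξ => ?_, fun ξ => ?_⟩
        · rw [hHe0, Hp17_zero]; simp
        · rw [hHe1]; simp [Hp17_succ, Hp17_zero]
      | succ k ih =>
        refine ⟨ih.2, fun ξ => ?_⟩
        rw [hHerec, ih.1, ih.2, Hp17_rec]
        simp
    exact fun k => (key k).1
  set c0 : ℝ := (Real.sqrt (Nat.factorial (n+1)) * Real.sqrt (2*Real.pi))⁻¹ with hc0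
  have sqf_pos : (0:ℝ) < Real.sqrt (Nat.factorial (n+1)) := Real.sqrt_pos.2 (by positivity)
  have sq2pi_pos : (0:ℝ) < Real.sqrt (2*Real.pi) := Real.sqrt_pos.2 (by positivity)
  -- rewrite the integrand
  have hconst : ∀ ξ, u ξ * φ (n+1) ξ * ω ξ = c0 * (u ξ * G17 (n+1) ξ) := by
    intro ξ
    rw [hφ, hω, Hebr]
    show _ = c0 * (u ξ * ((Hp17 (n+1)).eval ξ * rexp (-ξ^2/2)))
    rw [hc0]
    field_simp
  have hstep1 : ∫ ξ, u ξ * φ (n+1) ξ * ω ξ = c0 * ∫ ξ, u ξ * G17 (n+1) ξ := by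
    simp_rw [hconst]
    exact integral_const_mul _ _
  -- pointwise recurrence
  have hxG : ∀ x : ℝ, x * G17 (n+1) x = G17 (n+2) x + ((n:ℝ)+1) * G17 n x := by
    intro x
    simp only [G17, Hp17_rec, eval_sub, eval_mul, eval_X, eval_C]
    ring
  set fm : ℝ → ℝ := fun x => -a * G17 (n+1) x + b * (G17 (n+2) x + ((n:ℝ)+1) * G17 n x) with hfm
  set fp : ℝ → ℝ := fun x => a * G17 (n+1) x + b * (G17 (n+2) x + ((n:ℝ)+1) * G17 n x) with hfp
  have hfmInt : Integrable fm :=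
    ((G17_int (n+1)).const_mul (-a)).add
      (((G17_int (n+2)).add ((G17_int n).const_mul _)).const_mul b)
  have hfpInt : Integrable fp :=
    ((G17_int (n+1)).const_mul a).add
      (((G17_int (n+2)).add ((G17_int n).const_mul _)).const_mul b)
  have heqm : Set.EqOn fm (fun ξ => u ξ * G17 (n+1) ξ) (Iic ξs) := by
    intro ξ hξ
    have : ¬ ξs < ξ := not_lt.2 hξ
    simp only [hfm, hu, if_neg this]
    rw [← hxG ξ]
    ring
  have heqp : Set.EqOn fp (fun ξ => u ξ * G17 (n+1) ξ) (Ioi ξs) := by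
    intro ξ hξ
    simp only [hfp, hu, if_pos (mem_Ioi.1 hξ)]
    rw [← hxG ξ]
    ring
  have hIicInt : IntegrableOn (fun ξ => u ξ * G17 (n+1) ξ) (Iic ξs) :=
    hfmInt.integrableOn.congr_fun heqm measurableSet_Iic
  have hIoiInt : IntegrableOn (fun ξ => u ξ * G17 (n+1) ξ) (Ioi ξs) :=
    hfpInt.integrableOn.congr_fun heqp measurableSet_Ioi
  have hIic : ∫ ξ in Iic ξs, u ξ * G17 (n+1) ξ
      = -a * (-(G17 n ξs)) + b * (-(G17 (n+1) ξs) + ((n:ℝ)+1) * ∫ x in Iic ξs, G17 n x) := by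
    rw [← setIntegral_congr_fun measurableSet_Iic heqm, hfm]
    rw [combo17 (-a) b ((n:ℝ)+1) (G17_int (n+1)).integrableOn (G17_int (n+2)).integrableOn
      (G17_int n).integrableOn, G17_Iic, G17_Iic]
  have hIoi : ∫ ξ in Ioi ξs, u ξ * G17 (n+1) ξ
      = a * (G17 n ξs) + b * ((G17 (n+1) ξs) + ((n:ℝ)+1) * ∫ x in Ioi ξs, G17 n x) := by
    rw [← setIntegral_congr_fun measurableSet_Ioi heqp, hfp]
    rw [combo17 a b ((n:ℝ)+1) (G17_int (n+1)).integrableOn (G17_int (n+2)).integrableOn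
      (G17_int n).integrableOn, G17_Ioi, G17_Ioi]
  have hAB : (∫ x in Iic ξs, G17 n x) + (∫ x in Ioi ξs, G17 n x) = ∫ x, G17 n x :=
    intervalIntegral.integral_Iic_add_Ioi (G17_int n).integrableOn (G17_int n).integrableOn
  have htot : ∫ ξ, u ξ * G17 (n+1) ξ
      = 2 * a * G17 n ξs + b * ((n:ℝ)+1) * (if n = 0 then Real.sqrt (2*Real.pi) else 0) := by
    rw [← intervalIntegral.integral_Iic_add_Ioi hIicInt hIoiInt, hIic, hIoi,
      ← G17_total n, ← hAB]
    ring
  rw [hstep1, htot]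
  -- final algebra
  rw [hφ, Hebr]
  simp only [Nat.add_sub_cancel, G17]
  have hsqrt2pi : Real.sqrt (2*Real.pi) = Real.sqrt 2 * Real.sqrt Real.pi :=
    Real.sqrt_mul (by norm_num) _
  have h22 : Real.sqrt 2 * Real.sqrt 2 = 2 := Real.mul_self_sqrt (by norm_num)
  cases n with
  | zero =>
    simp only [if_pos rfl, Nat.factorial, Nat.cast_one, Real.sqrt_one, Nat.cast_zero]
    rw [hc0]
    simp only [Nat.factorial_one, Nat.cast_one, Real.sqrt_one, one_mul, Nat.factorial_zero,
      mul_one, Nat.cast_zero, zero_add]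
    rw [hsqrt2pi]
    have hsp : (0:ℝ) < Real.sqrt Real.pi := Real.sqrt_pos.2 Real.pi_pos
    have hs2 : (0:ℝ) < Real.sqrt 2 := Real.sqrt_pos.2 (by norm_num)
    field_simp
    ring_nf
    rw [show (Real.sqrt 2)^2 = 2 from Real.sq_sqrt (by norm_num)]
    simp only [ite_true]
    try ring
  | succ n =>
    have hif1 : (if n + 1 + 1 = 1 then (1:ℝ) else 0) = 0 := by norm_num
    have hif2 : (if n + 1 = 0 then Real.sqrt (2*Real.pi) else (0:ℝ)) = 0 := by norm_num
    rw [hif1, hif2, hc0]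
    have hfact : Real.sqrt ((Nat.factorial (n+2) : ℕ) : ℝ)
        = Real.sqrt ((n:ℝ)+2) * Real.sqrt ((Nat.factorial (n+1) : ℕ) : ℝ) := by
      rw [Nat.factorial_succ]
      push_cast
      rw [Real.sqrt_mul (by positivity)]
      congr 2
      ring
    have hpisq : Real.sqrt (Real.pi * ((n:ℝ)+1+1)) = Real.sqrt Real.pi * Real.sqrt ((n:ℝ)+2) := by
      rw [Real.sqrt_mul Real.pi_pos.le]
      ring_nf
    have hsp : (0:ℝ) < Real.sqrt Real.pi := Real.sqrt_pos.2 Real.pi_pos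
    have hs2 : (0:ℝ) < Real.sqrt 2 := Real.sqrt_pos.2 (by norm_num)
    have hsn2 : (0:ℝ) < Real.sqrt ((n:ℝ)+2) := Real.sqrt_pos.2 (by positivity)
    have hsf : (0:ℝ) < Real.sqrt ((Nat.factorial (n+1) : ℕ) : ℝ) := Real.sqrt_pos.2 (by positivity)
    push_cast
    rw [hfact, hsqrt2pi, hpisq]
    field_simp
    ring_nf
    rw [show (Real.sqrt 2)^2 = 2 from Real.sq_sqrt (by norm_num)]
    try ring
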